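/- Let θ, φ ∈ ℝ with cos θ ≠ 0, and fix natural numbers k and ℓ. Then there exists a polynomial Q ∈ ℂ[X] of degree at most ℓ such that for every natural number n ≥ ℓ, setting N = n + k − ℓ, the many-photon matrix element of the circuit consisting of a beam splitter of angle θ followed by a phase shifter of angle φ on the first mode satisfies e^{iNφ} · c_θ((n, k), (N, ℓ)) = e^{iNφ} · (cos θ)^N · √(N!/n!) · Q(n); equivalently, c_θ((n, k), (N, ℓ)) = (cos θ)^N · √(N!/n!) · Q(n). Moreover, if sin θ ≠ 0 then Q has degree exactly ℓ. -/

import Mathlib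

open Complex Real Finset Polynomial

noncomputable def bsCoeff (θ : ℝ) (k ℓ : ℕ × ℕ) : ℂ :=
  if ℓ.1 + ℓ.2 = k.1 + k.2 then
    (Real.sqrt ((ℓ.1.factorial * ℓ.2.factorial : ℕ) /
        ((k.1.factorial * k.2.factorial : ℕ) : ℝ)) : ℂ) *
      ∑ pq ∈ (Finset.HasAntidiagonal.antidiagonal ℓ.1).filter (fun pq => pq.1 ≤ k.1 ∧ pq.2 ≤ k.2),
        (k.1.choose pq.1 : ℂ) * (k.2.choose pq.2 : ℂ) *
          (Real.cos θ : ℂ) ^ (k.2 + pq.1 - pq.2) *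
          (Complex.I * Real.sin θ) ^ (k.1 - pq.1 + pq.2)
  else 0

theorem bsCoeff_polynomial_form (θ φ : ℝ) (hcos : Real.cos θ ≠ 0) (k ℓ : ℕ) :
    ∃ Q : Polynomial ℂ, Q.degree ≤ (ℓ : WithBot ℕ) ∧
      (∀ n : ℕ, ℓ ≤ n →
        Complex.exp (Complex.I * ((n + k - ℓ : ℕ) : ℂ) * φ) *
            bsCoeff θ (n, k) (n + k - ℓ, ℓ) =
          Complex.exp (Complex.I * ((n + k - ℓ : ℕ) : ℂ) * φ) *
            (Real.cos θ : ℂ) ^ (n + k - ℓ) *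
            (Real.sqrt ((n + k - ℓ).factorial / (n.factorial : ℝ)) : ℂ) *
            Q.eval (n : ℂ)) ∧
      (Real.sin θ ≠ 0 → Q.degree = (ℓ : WithBot ℕ)) := by
  set a : ℂ := (Real.cos θ : ℂ) with ha_def
  set b : ℂ := Complex.I * (Real.sin θ : ℂ) with hb_def
  have ha : a ≠ 0 := by rw [ha_def]; exact_mod_cast hcos
  set m := min ℓ k with hm
  set c : ℕ → ℂ := fun j => (Real.sqrt ((ℓ.factorial : ℝ) / (k.factorial : ℝ)) : ℂ) *
      (k.choose j : ℂ) * a ^ ((2 * j : ℤ) - k) * b ^ (k + ℓ - 2 * j) *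
      ((ℓ - j).factorial : ℂ)⁻¹ with hc
  refine ⟨∑ j ∈ Finset.range (m + 1), Polynomial.C (c j) * descPochhammer ℂ (ℓ - j),
    ?_, ?_, ?_⟩
  · refine (Polynomial.degree_sum_le _ _).trans (Finset.sup_le fun j hj => ?_)
    calc (Polynomial.C (c j) * descPochhammer ℂ (ℓ - j)).degree
        ≤ (Polynomial.C (c j)).degree + (descPochhammer ℂ (ℓ - j)).degree :=
          Polynomial.degree_mul_le _ _
      _ ≤ 0 + (ℓ - j : ℕ) := by
          refine add_le_add Polynomial.degree_C_le ?_
          exact (Polynomial.degree_le_natDegree).trans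
            (by rw [descPochhammer_natDegree])
      _ ≤ (ℓ : WithBot ℕ) := by
          rw [zero_add]
          exact_mod_cast Nat.cast_le.mpr (Nat.sub_le _ _)
  · intro n hℓn
    set N := n + k - ℓ with hN
    suffices h : bsCoeff θ (n, k) (N, ℓ) =
        a ^ N * (Real.sqrt ((N.factorial : ℝ) / (n.factorial : ℝ)) : ℂ) *
          (∑ j ∈ Finset.range (m + 1),
            Polynomial.C (c j) * descPochhammer ℂ (ℓ - j)).eval (n : ℂ) by
      rw [h]; ring
    rw [bsCoeff, if_pos (by simp only []; omega)]
    simp only []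
    -- reindex sum
    have hsum : ∑ pq ∈ (Finset.HasAntidiagonal.antidiagonal N).filter (fun pq => pq.1 ≤ n ∧ pq.2 ≤ k),
        (n.choose pq.1 : ℂ) * (k.choose pq.2 : ℂ) * a ^ (k + pq.1 - pq.2) *
          b ^ (n - pq.1 + pq.2) =
        ∑ j ∈ Finset.range (m + 1),
          (n.choose (n - ℓ + j) : ℂ) * (k.choose (k - j) : ℂ) * a ^ (n - ℓ + 2 * j) *
            b ^ (k + ℓ - 2 * j) := by
      refine Finset.sum_bij' (fun pq _ => k - pq.2) (fun j _ => (n - ℓ + j, k - j))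
        ?_ ?_ ?_ ?_ ?_
      · intro pq hpq
        simp only [Finset.mem_filter, Finset.HasAntidiagonal.mem_antidiagonal] at hpq
        simp only [Finset.mem_range, hm]
        omega
      · intro j hj
        simp only [Finset.mem_range, hm] at hj
        simp only [Finset.mem_filter, Finset.HasAntidiagonal.mem_antidiagonal]
        omega
      · intro pq hpq
        simp only [Finset.mem_filter, Finset.HasAntidiagonal.mem_antidiagonal] at hpq
        ext <;> simp <;> omega
      · intro j hj
        simp only [Finset.mem_range, hm] at hj
        show k - (k - j) = j
        omega
      · intro pq hpq
        simp only [Finset.mem_filter, Finset.HasAntidiagonal.mem_antidiagonal] at hpq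
        have e1 : n - ℓ + (k - pq.2) = pq.1 := by omega
        have e2 : k - (k - pq.2) = pq.2 := by omega
        have e3 : n - ℓ + 2 * (k - pq.2) = k + pq.1 - pq.2 := by omega
        have e4 : k + ℓ - 2 * (k - pq.2) = n - pq.1 + pq.2 := by omega
        rw [e1, e2, e3, e4]
    rw [hsum, Polynomial.eval_finset_sum, Finset.mul_sum, Finset.mul_sum]
    refine Finset.sum_congr rfl fun j hj => ?_
    simp only [Finset.mem_range, hm] at hj
    have hjℓ : j ≤ ℓ := by omega
    have hjk : j ≤ k := by omega
    -- rewrite pieces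
    have hch1 : (n.choose (n - ℓ + j) : ℂ) =
        (n.descFactorial (ℓ - j) : ℂ) * ((ℓ - j).factorial : ℂ)⁻¹ := by
      have h1 : n - ℓ + j = n - (ℓ - j) := by omega
      rw [h1, Nat.choose_symm (by omega)]
      have h2 : n.descFactorial (ℓ - j) = (ℓ - j).factorial * n.choose (ℓ - j) :=
        Nat.descFactorial_eq_factorial_mul_choose n (ℓ - j)
      have hfac : ((ℓ - j).factorial : ℂ) ≠ 0 := by
        exact_mod_cast (ℓ - j).factorial_ne_zero
      rw [h2]
      push_cast
      rw [mul_comm ((ℓ - j).factorial : ℂ), mul_assoc, mul_inv_cancel₀ hfac, mul_one]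
    have hch2 : (k.choose (k - j) : ℂ) = (k.choose j : ℂ) := by
      rw [Nat.choose_symm hjk]
    have hpow : a ^ (n - ℓ + 2 * j) = a ^ N * a ^ ((2 * j : ℤ) - k) := by
      rw [← zpow_natCast a (n - ℓ + 2 * j), ← zpow_natCast a N, ← zpow_add₀ ha]
      congr 1
      omega
    have hsqrt : (Real.sqrt (((N.factorial * ℓ.factorial : ℕ) : ℝ) /
        ((n.factorial * k.factorial : ℕ) : ℝ)) : ℂ) =
        (Real.sqrt ((N.factorial : ℝ) / (n.factorial : ℝ)) : ℂ) *
          (Real.sqrt ((ℓ.factorial : ℝ) / (k.factorial : ℝ)) : ℂ) := by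
      rw [← Complex.ofReal_mul, ← Real.sqrt_mul (by positivity)]
      congr 2
      push_cast
      field_simp
    rw [Polynomial.eval_mul, Polynomial.eval_C,
      descPochhammer_eval_eq_descFactorial ℂ n (ℓ - j), hch1, hch2, hpow, hsqrt, hc]
    ring
  · intro hsin
    have hb : b ≠ 0 := by
      rw [hb_def]
      exact mul_ne_zero Complex.I_ne_zero (Complex.ofReal_ne_zero.mpr hsin)
    have hc0 : c 0 ≠ 0 := by
      rw [hc]
      refine mul_ne_zero (mul_ne_zero (mul_ne_zero (mul_ne_zero ?_ ?_) ?_) ?_) ?_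
      · exact Complex.ofReal_ne_zero.mpr (by positivity)
      · simp
      · exact zpow_ne_zero _ ha
      · exact pow_ne_zero _ hb
      · exact inv_ne_zero (by exact_mod_cast ℓ.factorial_ne_zero)
    have hcoeff : (∑ j ∈ Finset.range (m + 1),
        Polynomial.C (c j) * descPochhammer ℂ (ℓ - j)).coeff ℓ = c 0 := by
      rw [Polynomial.finset_sum_coeff]
      rw [Finset.sum_eq_single 0]
      · rw [Polynomial.coeff_C_mul, Nat.sub_zero]
        have : (descPochhammer ℂ ℓ).coeff ℓ = 1 := by
          have := (monic_descPochhammer ℂ ℓ).coeff_natDegree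
          rwa [descPochhammer_natDegree] at this
        rw [this, mul_one]
      · intro j hj hj0
        simp only [Finset.mem_range, hm] at hj
        rw [Polynomial.coeff_C_mul, Polynomial.coeff_eq_zero_of_natDegree_lt, mul_zero]
        rw [descPochhammer_natDegree]
        omega
      · intro h
        exact absurd (Finset.mem_range.mpr (Nat.succ_pos m)) h
    refine le_antisymm ?_ ?_
    · refine (Polynomial.degree_sum_le _ _).trans (Finset.sup_le fun j hj => ?_)
      calc (Polynomial.C (c j) * descPochhammer ℂ (ℓ - j)).degree
          ≤ (Polynomial.C (c j)).degree + (descPochhammer ℂ (ℓ - j)).degree :=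
            Polynomial.degree_mul_le _ _
        _ ≤ 0 + (ℓ - j : ℕ) := by
            refine add_le_add Polynomial.degree_C_le ?_
            exact (Polynomial.degree_le_natDegree).trans
              (by rw [descPochhammer_natDegree])
        _ ≤ (ℓ : WithBot ℕ) := by
            rw [zero_add]
            exact_mod_cast Nat.cast_le.mpr (Nat.sub_le _ _)
    · exact Polynomial.le_degree_of_ne_zero (by rw [hcoeff]; exact hc0)
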